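/- Let Γ₁ be a finite simple graph on V₁ with Laplacian L₁ and Γ₂ a finite simple graph on V₂ with Laplacian L₂; fix v₁ ∈ V₁ and v₂ ∈ V₂. Let Γ be the one-edge bridge gluing: the simple graph on V₁ ⊕ V₂ with inl a ~ inl a' iff a ~ a' in Γ₁, inr b ~ inr b' iff b ~ b' in Γ₂, and inl a ~ inr b iff a = v₁ and b = v₂. Let L be the Laplacian of Γ. Then, as polynomials in λ over ℝ: det(L − λ·1) = det(L₁ − λ·1)·det(L₂ − λ·1) + det(L₁ − λ·1)·det(L₂⟨v₂⟩ − λ·1) + det(L₁⟨v₁⟩ − λ·1)·det(L₂ − λ·1), where M⟨v⟩ denotes the principal submatrix of M deleting row v and column v. -/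

import Mathlib

open Polynomial

open scoped Classical

open Matrix

section Aux
variable {R : Type*} [CommRing R]

lemma my_updateRow_comm {n : Type*} [DecidableEq n] {p : Type*} (M : Matrix n p R) {i j : n}
    (h : i ≠ j) (u v : p → R) :
    (M.updateRow i u).updateRow j v = (M.updateRow j v).updateRow i u := by
  ext a b
  simp only [Matrix.updateRow_apply]
  split_ifs with h1 h2 <;> simp_all

lemma my_updateRow_fromBlocks_inl {m p : Type*} [DecidableEq m] [DecidableEq p]
    (A : Matrix m m R) (B : Matrix m p R) (C : Matrix p m R) (D : Matrix p p R)
    (i : m) (u : m ⊕ p → R) :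
    (Matrix.fromBlocks A B C D).updateRow (Sum.inl i) u =
      Matrix.fromBlocks (A.updateRow i (u ∘ Sum.inl)) (B.updateRow i (u ∘ Sum.inr)) C D := by
  ext (x | x) (y | y) <;>
    simp [Matrix.updateRow_apply, Sum.inl.injEq, apply_ite (fun f : (m ⊕ p → R) => f _)]

lemma my_updateRow_fromBlocks_inr {m p : Type*} [DecidableEq m] [DecidableEq p]
    (A : Matrix m m R) (B : Matrix m p R) (C : Matrix p m R) (D : Matrix p p R)
    (i : p) (u : m ⊕ p → R) :
    (Matrix.fromBlocks A B C D).updateRow (Sum.inr i) u =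
      Matrix.fromBlocks A B (C.updateRow i (u ∘ Sum.inl)) (D.updateRow i (u ∘ Sum.inr)) := by
  ext (x | x) (y | y) <;>
    simp [Matrix.updateRow_apply, Sum.inr.injEq, apply_ite (fun f : (m ⊕ p → R) => f _)]

lemma det_updateRow_single_self {n : Type*} [Fintype n] [DecidableEq n]
    (A : Matrix n n R) (v : n) :
    (A.updateRow v (Pi.single v 1)).det =
      (A.submatrix (Subtype.val : {x : n // x ≠ v} → n) Subtype.val).det := by
  classical
  have e : {x : n // x = v} ⊕ {x : n // ¬ x = v} ≃ n := Equiv.sumCompl (· = v)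
  rw [← Matrix.det_submatrix_equiv_self (Equiv.sumCompl (· = v)) (A.updateRow v (Pi.single v 1))]
  haveI : Unique {x : n // x = v} := ⟨⟨⟨v, rfl⟩⟩, fun a => Subtype.ext a.2⟩
  have hblock : (A.updateRow v (Pi.single v 1)).submatrix (Equiv.sumCompl (· = v))
      (Equiv.sumCompl (· = v)) =
      Matrix.fromBlocks (Matrix.of fun _ _ => (1 : R)) 0
        (Matrix.of fun (i : {x : n // ¬ x = v}) (_ : {x : n // x = v}) => A i.1 v)
        (A.submatrix Subtype.val Subtype.val) := by
    ext i j
    obtain ⟨i, hi⟩ | ⟨i, hi⟩ := i <;> obtain ⟨j, hj⟩ | ⟨j, hj⟩ := j <;>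
      simp_all [Matrix.updateRow_apply, Pi.single_apply, Equiv.sumCompl_apply_inl,
        Equiv.sumCompl_apply_inr]
  rw [hblock, Matrix.det_fromBlocks_zero₁₂, Matrix.det_unique]
  simp

end Aux

section Bridge
variable {R : Type*} [CommRing R] {m p : Type*} [Fintype m] [Fintype p]
  [DecidableEq m] [DecidableEq p]

lemma det_bridge (A : Matrix m m R) (B : Matrix p p R) (v₁ : m) (v₂ : p) :
    (Matrix.fromBlocks A 0 0 B +
      Matrix.vecMulVec (Sum.elim (Pi.single v₁ 1) (-Pi.single v₂ 1))
        (Sum.elim (Pi.single v₁ 1) (-Pi.single v₂ 1))).det =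
    A.det * B.det +
      A.det * (B.submatrix (Subtype.val : {x : p // x ≠ v₂} → p) Subtype.val).det +
      (A.submatrix (Subtype.val : {x : m // x ≠ v₁} → m) Subtype.val).det * B.det := by
  classical
  set w : m ⊕ p → R := Sum.elim (Pi.single v₁ 1) (-Pi.single v₂ 1) with hw
  set D : Matrix (m ⊕ p) (m ⊕ p) R := Matrix.fromBlocks A 0 0 B with hD
  set r₁ : m ⊕ p := Sum.inl v₁ with hr₁
  set r₂ : m ⊕ p := Sum.inr v₂ with hr₂
  have hr : r₁ ≠ r₂ := by simp [hr₁, hr₂]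
  -- express the perturbed matrix as two row updates
  have hM : D + Matrix.vecMulVec w w =
      (D.updateRow r₁ (D r₁ + w)).updateRow r₂ (D r₂ + (-w)) := by
    ext i j
    rcases eq_or_ne i r₂ with rfl | h2
    · simp only [Matrix.updateRow_self, Matrix.add_apply, Matrix.vecMulVec_apply,
        Pi.add_apply, Pi.neg_apply]
      have : w r₂ = -1 := by simp [hw, hr₂]
      rw [this]; ring
    · rw [Matrix.updateRow_ne h2]
      rcases eq_or_ne i r₁ with rfl | h1
      · simp only [Matrix.updateRow_self, Matrix.add_apply, Matrix.vecMulVec_apply,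
          Pi.add_apply]
        have : w r₁ = 1 := by simp [hw, hr₁]
        rw [this]; ring
      · rw [Matrix.updateRow_ne h1]
        have hw0 : w i = 0 := by
          rcases i with a | b
          · have ha : a ≠ v₁ := by simpa [hr₁] using h1
            simp [hw, Pi.single_apply, ha]
          · have hb : b ≠ v₂ := by simpa [hr₂] using h2
            simp [hw, Pi.single_apply, hb]
        simp [Matrix.vecMulVec_apply, hw0]
  -- auxiliary row vectors
  set u₁ : m ⊕ p → R := Sum.elim (Pi.single v₁ 1) 0 with hu₁
  set u₂ : m ⊕ p → R := Sum.elim 0 (-Pi.single v₂ 1) with hu₂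
  set u₃ : m ⊕ p → R := Sum.elim 0 (Pi.single v₂ 1) with hu₃
  set u₄ : m ⊕ p → R := Sum.elim (-Pi.single v₁ 1) 0 with hu₄
  have hw12 : w = u₁ + u₂ := by
    funext x; rcases x with a | b <;> simp [hw, hu₁, hu₂, Pi.single_apply]
  have hw34 : -w = u₃ + u₄ := by
    funext x; rcases x with a | b <;> simp [hw, hu₃, hu₄, Pi.single_apply]
  -- key determinant values
  have hd1 : (D.updateRow r₁ u₁).det =
      (A.submatrix (Subtype.val : {x : m // x ≠ v₁} → m) Subtype.val).det * B.det := by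
    rw [hD, hr₁, my_updateRow_fromBlocks_inl]
    have c1 : u₁ ∘ Sum.inl = Pi.single v₁ 1 := Sum.elim_comp_inl _ _
    have c2 : u₁ ∘ Sum.inr = (0 : p → R) := Sum.elim_comp_inr _ _
    rw [c1, c2]
    have : (0 : Matrix m p R).updateRow v₁ (0 : p → R) = 0 := by
      funext i j; simp [Matrix.updateRow_apply]
    rw [this, Matrix.det_fromBlocks_zero₂₁, det_updateRow_single_self]
  have hd2 : (D.updateRow r₁ u₂).det = 0 := by
    rw [hD, hr₁, my_updateRow_fromBlocks_inl]
    have c1 : u₂ ∘ Sum.inl = (0 : m → R) := Sum.elim_comp_inl _ _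
    rw [c1, Matrix.det_fromBlocks_zero₂₁]
    have : (A.updateRow v₁ (0 : m → R)).det = 0 :=
      Matrix.det_eq_zero_of_row_eq_zero v₁ (by simp)
    rw [this, zero_mul]
  have hd3 : (D.updateRow r₂ u₃).det =
      A.det * (B.submatrix (Subtype.val : {x : p // x ≠ v₂} → p) Subtype.val).det := by
    rw [hD, hr₂, my_updateRow_fromBlocks_inr]
    have c1 : u₃ ∘ Sum.inl = (0 : m → R) := Sum.elim_comp_inl _ _
    have c2 : u₃ ∘ Sum.inr = Pi.single v₂ 1 := Sum.elim_comp_inr _ _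
    rw [c1, c2]
    have : (0 : Matrix p m R).updateRow v₂ (0 : m → R) = 0 := by
      funext i j; simp [Matrix.updateRow_apply]
    rw [this, Matrix.det_fromBlocks_zero₂₁, det_updateRow_single_self]
  have hd4 : (D.updateRow r₂ u₄).det = 0 := by
    rw [hD, hr₂, my_updateRow_fromBlocks_inr]
    have c2 : u₄ ∘ Sum.inr = (0 : p → R) := Sum.elim_comp_inr _ _
    rw [c2, Matrix.det_fromBlocks_zero₁₂]
    have : (B.updateRow v₂ (0 : p → R)).det = 0 :=
      Matrix.det_eq_zero_of_row_eq_zero v₂ (by simp)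
    rw [this, mul_zero]
  -- the vanishing double-update term
  have hzero : ((D.updateRow r₂ (-w)).updateRow r₁ w).det = 0 := by
    rw [my_updateRow_comm _ hr.symm]
    have : -w = (-1 : R) • w := by funext j; simp
    rw [this, Matrix.det_updateRow_smul]
    have hrows : ((D.updateRow r₁ w).updateRow r₂ w) r₁ =
        ((D.updateRow r₁ w).updateRow r₂ w) r₂ := by
      rw [Matrix.updateRow_ne hr, Matrix.updateRow_self, Matrix.updateRow_self]
    rw [Matrix.det_zero_of_row_eq hr hrows, mul_zero]
  -- assemble
  rw [hM, Matrix.det_updateRow_add]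
  have e1 : (D.updateRow r₁ (D r₁ + w)).updateRow r₂ (D r₂) =
      D.updateRow r₁ (D r₁ + w) := by
    conv_lhs => rw [show D r₂ = (D.updateRow r₁ (D r₁ + w)) r₂ from
      (Matrix.updateRow_ne hr.symm).symm]
    exact Matrix.updateRow_eq_self _ _
  rw [e1, Matrix.det_updateRow_add, Matrix.updateRow_eq_self]
  rw [my_updateRow_comm _ hr, Matrix.det_updateRow_add]
  have e2 : (D.updateRow r₂ (-w)).updateRow r₁ (D r₁) = D.updateRow r₂ (-w) := by
    conv_lhs => rw [show D r₁ = (D.updateRow r₂ (-w)) r₁ from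
      (Matrix.updateRow_ne hr).symm]
    exact Matrix.updateRow_eq_self _ _
  rw [e2, hzero]
  rw [hw34, Matrix.det_updateRow_add, hw12, Matrix.det_updateRow_add]
  rw [hd1, hd2, hd3, hd4, hD, Matrix.det_fromBlocks_zero₂₁]
  ring

end Bridge

/-- `det (M - λ·1)`, the characteristic determinant of a square real matrix,
as a polynomial in `λ`. -/
noncomputable def charDet {n : Type*} [Fintype n] [DecidableEq n] (M : Matrix n n ℝ) :
    ℝ[X] :=
  (M.map C - (X : ℝ[X]) • 1).det

/-- The principal submatrix of `M` obtained by deleting the row and column indexed by `v`. -/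
def deleteVertex {n : Type*} (M : Matrix n n ℝ) (v : n) :
    Matrix {x : n // x ≠ v} {x : n // x ≠ v} ℝ :=
  M.submatrix Subtype.val Subtype.val

/-- The one-edge bridge gluing of `G₁` and `G₂`: the graph on `V₁ ⊕ V₂` with a single new
edge joining `v₁` to `v₂`. -/
def bridgeGlueOne {V₁ V₂ : Type*} (G₁ : SimpleGraph V₁) (G₂ : SimpleGraph V₂)
    (v₁ : V₁) (v₂ : V₂) : SimpleGraph (V₁ ⊕ V₂) where
  Adj x y :=
    match x, y with
    | Sum.inl u, Sum.inl v => G₁.Adj u v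
    | Sum.inr u, Sum.inr v => G₂.Adj u v
    | Sum.inl u, Sum.inr v => u = v₁ ∧ v = v₂
    | Sum.inr u, Sum.inl v => v = v₁ ∧ u = v₂
  symm := by
    refine ⟨?_⟩
    rintro (u | u) (v | v) h
    · exact G₁.adj_symm h
    · exact h
    · exact h
    · exact G₂.adj_symm h
  loopless := by
    refine ⟨?_⟩
    rintro (u | u) h
    · exact G₁.irrefl h
    · exact G₂.irrefl h

section GraphSide

variable {V₁ V₂ : Type*} [Fintype V₁] [Fintype V₂] [DecidableEq V₁] [DecidableEq V₂]
  (G₁ : SimpleGraph V₁) (G₂ : SimpleGraph V₂) [DecidableRel G₁.Adj] [DecidableRel G₂.Adj]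
  (v₁ : V₁) (v₂ : V₂)

lemma my_lapMatrix_apply {n : Type*} [Fintype n] [DecidableEq n] (G : SimpleGraph n)
    [DecidableRel G.Adj] (i j : n) :
    G.lapMatrix ℝ i j =
      (if i = j then (G.degree i : ℝ) else 0) - (if G.Adj i j then 1 else 0) := by
  simp [SimpleGraph.lapMatrix, SimpleGraph.degMatrix, Matrix.diagonal_apply,
    SimpleGraph.adjMatrix]

lemma degree_bridge_inl (a : V₁) :
    (bridgeGlueOne G₁ G₂ v₁ v₂).degree (Sum.inl a) =
      G₁.degree a + (if a = v₁ then 1 else 0) := by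
  classical
  have h1 : (bridgeGlueOne G₁ G₂ v₁ v₂).degree (Sum.inl a)
      = ∑ x : V₁ ⊕ V₂, if (bridgeGlueOne G₁ G₂ v₁ v₂).Adj (Sum.inl a) x then 1 else 0 := by
    rw [← SimpleGraph.card_neighborFinset_eq_degree, SimpleGraph.neighborFinset_eq_filter,
      Finset.card_filter]
  have h2 : G₁.degree a = ∑ x : V₁, if G₁.Adj a x then 1 else 0 := by
    rw [← SimpleGraph.card_neighborFinset_eq_degree, SimpleGraph.neighborFinset_eq_filter,
      Finset.card_filter]
  rw [h1, Fintype.sum_sum_type]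
  have h3 : ∑ x : V₁, (if (bridgeGlueOne G₁ G₂ v₁ v₂).Adj (Sum.inl a) (Sum.inl x) then 1 else 0)
      = G₁.degree a := by
    rw [h2]; exact Finset.sum_congr rfl fun x _ => by simp [bridgeGlueOne]; congr
  have h4 : ∑ x : V₂, (if (bridgeGlueOne G₁ G₂ v₁ v₂).Adj (Sum.inl a) (Sum.inr x) then 1 else 0)
      = if a = v₁ then 1 else 0 := by
    by_cases h : a = v₁ <;> simp [bridgeGlueOne, h]
  rw [h3, h4]

lemma degree_bridge_inr (b : V₂) :
    (bridgeGlueOne G₁ G₂ v₁ v₂).degree (Sum.inr b) =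
      G₂.degree b + (if b = v₂ then 1 else 0) := by
  classical
  have h1 : (bridgeGlueOne G₁ G₂ v₁ v₂).degree (Sum.inr b)
      = ∑ x : V₁ ⊕ V₂, if (bridgeGlueOne G₁ G₂ v₁ v₂).Adj (Sum.inr b) x then 1 else 0 := by
    rw [← SimpleGraph.card_neighborFinset_eq_degree, SimpleGraph.neighborFinset_eq_filter,
      Finset.card_filter]
  have h2 : G₂.degree b = ∑ x : V₂, if G₂.Adj b x then 1 else 0 := by
    rw [← SimpleGraph.card_neighborFinset_eq_degree, SimpleGraph.neighborFinset_eq_filter,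
      Finset.card_filter]
  rw [h1, Fintype.sum_sum_type]
  have h3 : ∑ x : V₂, (if (bridgeGlueOne G₁ G₂ v₁ v₂).Adj (Sum.inr b) (Sum.inr x) then 1 else 0)
      = G₂.degree b := by
    rw [h2]; exact Finset.sum_congr rfl fun x _ => by simp [bridgeGlueOne]; congr
  have h4 : ∑ x : V₁, (if (bridgeGlueOne G₁ G₂ v₁ v₂).Adj (Sum.inr b) (Sum.inl x) then 1 else 0)
      = if b = v₂ then 1 else 0 := by
    by_cases h : b = v₂ <;> simp [bridgeGlueOne, h]
  rw [h4, h3, Nat.add_comm]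

end GraphSide

lemma charDet_deleteVertex {n : Type*} [Fintype n] [DecidableEq n]
    (L : Matrix n n ℝ) (v : n) :
    ((L.map C - (X : ℝ[X]) • 1).submatrix (Subtype.val : {x : n // x ≠ v} → n)
      Subtype.val).det = charDet (deleteVertex L v) := by
  unfold charDet deleteVertex
  congr 1
  ext i j
  simp [Matrix.submatrix_apply, Matrix.one_apply, Matrix.smul_apply, Subtype.ext_iff]

theorem charDet_bridgeGlueOne {V₁ V₂ : Type*} [Fintype V₁] [Fintype V₂]
    [DecidableEq V₁] [DecidableEq V₂]
    (G₁ : SimpleGraph V₁) (G₂ : SimpleGraph V₂)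
    [DecidableRel G₁.Adj] [DecidableRel G₂.Adj]
    (v₁ : V₁) (v₂ : V₂) :
    charDet ((bridgeGlueOne G₁ G₂ v₁ v₂).lapMatrix ℝ) =
      charDet (G₁.lapMatrix ℝ) * charDet (G₂.lapMatrix ℝ) +
      charDet (G₁.lapMatrix ℝ) * charDet (deleteVertex (G₂.lapMatrix ℝ) v₂) +
      charDet (deleteVertex (G₁.lapMatrix ℝ) v₁) * charDet (G₂.lapMatrix ℝ) := by
  classical
  set A₁ : Matrix V₁ V₁ ℝ[X] := (G₁.lapMatrix ℝ).map C - (X : ℝ[X]) • 1 with hA₁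
  set A₂ : Matrix V₂ V₂ ℝ[X] := (G₂.lapMatrix ℝ).map C - (X : ℝ[X]) • 1 with hA₂
  set w : V₁ ⊕ V₂ → ℝ[X] := Sum.elim (Pi.single v₁ 1) (-Pi.single v₂ 1) with hw
  have key : ((bridgeGlueOne G₁ G₂ v₁ v₂).lapMatrix ℝ).map C - (X : ℝ[X]) • 1 =
      Matrix.fromBlocks A₁ 0 0 A₂ + Matrix.vecMulVec w w := by
    ext i j
    rcases i with a | b <;> rcases j with a' | b'
    · simp only [Matrix.sub_apply, Matrix.map_apply, Matrix.add_apply,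
        Matrix.fromBlocks_apply₁₁, Matrix.vecMulVec_apply, Matrix.smul_apply,
        Matrix.one_apply, smul_eq_mul, hw, Sum.elim_inl,
        my_lapMatrix_apply, degree_bridge_inl, hA₁]
      by_cases hij : a = a'
      · subst hij
        by_cases h1 : a = v₁ <;>
          (simp [h1, bridgeGlueOne, Pi.single_apply, SimpleGraph.irrefl] <;> first | rfl | ring)
      · have : (Sum.inl a : V₁ ⊕ V₂) ≠ Sum.inl a' := by simpa using hij
        by_cases h1 : a = v₁ <;> by_cases h2 : a' = v₁ <;>
          (simp_all [bridgeGlueOne, Pi.single_apply] <;> first | rfl | (split_ifs <;> simp_all; done) | ring)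
    · simp only [Matrix.sub_apply, Matrix.map_apply, Matrix.add_apply,
        Matrix.fromBlocks_apply₁₂, Matrix.vecMulVec_apply, Matrix.smul_apply,
        Matrix.one_apply, smul_eq_mul, hw, Sum.elim_inl, Sum.elim_inr,
        my_lapMatrix_apply]
      by_cases h1 : a = v₁ <;> by_cases h2 : b' = v₂ <;>
        (simp_all [bridgeGlueOne, Pi.single_apply] <;> first | rfl | ring)
    · simp only [Matrix.sub_apply, Matrix.map_apply, Matrix.add_apply,
        Matrix.fromBlocks_apply₂₁, Matrix.vecMulVec_apply, Matrix.smul_apply,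
        Matrix.one_apply, smul_eq_mul, hw, Sum.elim_inl, Sum.elim_inr,
        my_lapMatrix_apply]
      by_cases h1 : a' = v₁ <;> by_cases h2 : b = v₂ <;>
        (simp_all [bridgeGlueOne, Pi.single_apply] <;> first | rfl | ring)
    · simp only [Matrix.sub_apply, Matrix.map_apply, Matrix.add_apply,
        Matrix.fromBlocks_apply₂₂, Matrix.vecMulVec_apply, Matrix.smul_apply,
        Matrix.one_apply, smul_eq_mul, hw, Sum.elim_inr,
        my_lapMatrix_apply, degree_bridge_inr, hA₂]
      by_cases hij : b = b'
      · subst hij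
        by_cases h1 : b = v₂ <;>
          (simp [h1, bridgeGlueOne, Pi.single_apply, SimpleGraph.irrefl] <;> first | rfl | ring)
      · have : (Sum.inr b : V₁ ⊕ V₂) ≠ Sum.inr b' := by simpa using hij
        by_cases h1 : b = v₂ <;> by_cases h2 : b' = v₂ <;>
          (simp_all [bridgeGlueOne, Pi.single_apply] <;> first | rfl | (split_ifs <;> simp_all; done) | ring)
  show ((((bridgeGlueOne G₁ G₂ v₁ v₂).lapMatrix ℝ).map C - (X : ℝ[X]) • 1)).det = _
  rw [key, hw, det_bridge, hA₁, hA₂, charDet_deleteVertex, charDet_deleteVertex]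
  rfl
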